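/- Let G be a planar graph on n vertices with n ≥ 2 that contains neither K4 nor C5 as a subgraph, and such that G contains no maximal 2-connected subgraph on more than 4 vertices. Then e(G) ≤ 2n − 15/7. -/

import Mathlib

open SimpleGraph

namespace PlanarTuran

/-- Reversal of darts, as a permutation of the darts of `G`. -/
def dartRev {V : Type*} (G : SimpleGraph V) : Equiv.Perm G.Dart where
  toFun := Dart.symm
  invFun := Dart.symm
  left_inv d := Dart.symm_symm d
  right_inv d := Dart.symm_symm d

/-- A rotation system (combinatorial embedding) of a simple graph `G`: a permutation of the
darts which fixes the initial vertex of every dart and is a single cycle on the darts leaving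
each given vertex. -/
structure RotationSystem {V : Type*} (G : SimpleGraph V) where
  rot : Equiv.Perm G.Dart
  rot_fst : ∀ d : G.Dart, (rot d).fst = d.fst
  rot_cycle : ∀ d d' : G.Dart, d.fst = d'.fst → rot.SameCycle d d'

namespace RotationSystem

variable {V : Type*} {G : SimpleGraph V}

/-- The face permutation of the embedding: its orbits are the faces of the plane graph. -/
def facePerm (R : RotationSystem G) : Equiv.Perm G.Dart :=
  (dartRev G).trans R.rot

/-- The face containing (the side of) a dart, encoded as the set of darts on its boundary walk. -/
def faceOf (R : RotationSystem G) (d : G.Dart) : Set G.Dart :=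
  {d' | R.facePerm.SameCycle d d'}

/-- The length of the face incident to the dart `d`: the number of edge-sides on its
boundary walk (a bridge is counted twice). -/
noncomputable def faceLen (R : RotationSystem G) (d : G.Dart) : ℕ :=
  (R.faceOf d).ncard

/-- Darts lying on the same face. -/
def faceSetoid (R : RotationSystem G) : Setoid G.Dart :=
  ⟨R.facePerm.SameCycle,
   ⟨fun d => Equiv.Perm.SameCycle.refl _ d, fun h => h.symm, fun h h' => h.trans h'⟩⟩

/-- The number of faces of the embedded graph (only counting faces having at least one edge on
their boundary). -/
noncomputable def numFaces (R : RotationSystem G) : ℕ :=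
  Nat.card (Quotient R.faceSetoid)

/-- Darts on the same face, within the connected component `C`. -/
def faceSetoidIn (R : RotationSystem G) (C : G.ConnectedComponent) :
    Setoid {d : G.Dart // G.connectedComponentMk d.fst = C} :=
  ⟨fun d d' => R.facePerm.SameCycle d.1 d'.1,
   ⟨fun d => Equiv.Perm.SameCycle.refl _ _, fun h => h.symm, fun h h' => h.trans h'⟩⟩

/-- The rotation system is a *plane* (genus zero) embedding: every connected component
containing at least one edge satisfies Euler's formula `n - e + f = 2`
(written here as `2*n + 2*f = 2*e + 4`, where `2*e` is the number of darts). -/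
def GenusZero (R : RotationSystem G) : Prop :=
  ∀ C : G.ConnectedComponent, (∃ d : G.Dart, G.connectedComponentMk d.fst = C) →
    2 * Nat.card {v : V // G.connectedComponentMk v = C}
      + 2 * Nat.card (Quotient (R.faceSetoidIn C))
      = Nat.card {d : G.Dart // G.connectedComponentMk d.fst = C} + 4

/-- The contribution `f(e) = 1/l₁ + 1/l₂` of an edge `e` to the face number, where `l₁, l₂`
are the lengths of the faces incident to the two darts of `e` (for a bridge both darts lie
on the same face, giving `f(e) = 2/l`). -/
noncomputable def fEdge [Fintype V] [DecidableEq V] [DecidableRel G.Adj]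
    (R : RotationSystem G) (e : Sym2 V) : ℚ :=
  ∑ d ∈ Finset.univ.filter (fun d : G.Dart => d.edge = e), (1 : ℚ) / (R.faceLen d)

/-- The edges `e₁` and `e₂` both lie on a common `3`-face. -/
def shares3Face (R : RotationSystem G) (e₁ e₂ : Sym2 V) : Prop :=
  ∃ d₁ d₂ : G.Dart, d₁.edge = e₁ ∧ d₂.edge = e₂ ∧ R.faceLen d₁ = 3 ∧
    R.facePerm.SameCycle d₁ d₂

/-- The triangular block generated by an edge `e`: the closure of `{e}` under adding all
edges of any `3`-face containing an edge already present. -/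
def triBlockOf (R : RotationSystem G) (e : Sym2 V) : Set (Sym2 V) :=
  {e' | Relation.ReflTransGen R.shares3Face e e'}

/-- `B` is a triangular block of the plane graph `G`. -/
def IsTriangularBlock (R : RotationSystem G) (B : Set (Sym2 V)) : Prop :=
  ∃ e ∈ G.edgeSet, B = R.triBlockOf e

end RotationSystem

/-- A graph is planar iff it admits a genus-zero rotation system. -/
def _root_.SimpleGraph.IsPlanar {V : Type*} (G : SimpleGraph V) : Prop :=
  ∃ R : RotationSystem G, R.GenusZero

/-- `G` contains no cycle of length `k`; equivalently, no subgraph isomorphic to `C_k`. -/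
def _root_.SimpleGraph.CycleFree {V : Type*} (G : SimpleGraph V) (k : ℕ) : Prop :=
  ∀ ⦃v : V⦄ (w : G.Walk v v), w.IsCycle → w.length ≠ k

/-- A graph is 2-connected if it has at least 3 vertices and deleting any single vertex
leaves it connected. -/
def _root_.SimpleGraph.IsTwoConnected {V : Type*} (G : SimpleGraph V) : Prop :=
  3 ≤ Nat.card V ∧ ∀ v : V, (G.induce {u | u ≠ v}).Connected

/-- The set of vertices covered by a set `B` of edges. -/
def blockVerts {V : Type*} (B : Set (Sym2 V)) : Set V :=
  {v | ∃ e ∈ B, v ∈ e}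

/-- An edge set forming a single edge `K₂`. -/
def IsK2Block {V : Type*} (B : Set (Sym2 V)) : Prop :=
  ∃ u v : V, u ≠ v ∧ B = {s(u, v)}

/-- An edge set forming a triangle `K₃`. -/
def IsK3Block {V : Type*} (B : Set (Sym2 V)) : Prop :=
  ∃ u v w : V, u ≠ v ∧ u ≠ w ∧ v ≠ w ∧ B = {s(u, v), s(v, w), s(u, w)}

/-- An edge set forming `B₄`, two triangles `u v w` and `v w x` sharing the edge `v w`
(`K₄` minus an edge). -/
def IsB4Block {V : Type*} (B : Set (Sym2 V)) : Prop :=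
  ∃ u v w x : V, u ≠ v ∧ u ≠ w ∧ u ≠ x ∧ v ≠ w ∧ v ≠ x ∧ w ≠ x ∧
    B = {s(u, v), s(u, w), s(v, w), s(v, x), s(w, x)}

/-- An edge set forming `B₅ₐ`: a path `x₁x₂x₃x₄` plus an apex `y` joined to all of
`x₁, x₂, x₃, x₄`. -/
def IsB5aBlock {V : Type*} (B : Set (Sym2 V)) : Prop :=
  ∃ y x₁ x₂ x₃ x₄ : V, y ≠ x₁ ∧ y ≠ x₂ ∧ y ≠ x₃ ∧ y ≠ x₄ ∧ x₁ ≠ x₂ ∧ x₁ ≠ x₃ ∧ x₁ ≠ x₄ ∧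
    x₂ ≠ x₃ ∧ x₂ ≠ x₄ ∧ x₃ ≠ x₄ ∧
    B = {s(y, x₁), s(y, x₂), s(y, x₃), s(y, x₄), s(x₁, x₂), s(x₂, x₃), s(x₃, x₄)}

/-- An edge set forming `B₅ᵦ`, the wheel `W₄`: a `4`-cycle `x₁x₂x₃x₄` plus a center `c`
joined to all four cycle vertices. -/
def IsB5bBlock {V : Type*} (B : Set (Sym2 V)) : Prop :=
  ∃ c x₁ x₂ x₃ x₄ : V, c ≠ x₁ ∧ c ≠ x₂ ∧ c ≠ x₃ ∧ c ≠ x₄ ∧ x₁ ≠ x₂ ∧ x₁ ≠ x₃ ∧ x₁ ≠ x₄ ∧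
    x₂ ≠ x₃ ∧ x₂ ≠ x₄ ∧ x₃ ≠ x₄ ∧
    B = {s(c, x₁), s(c, x₂), s(c, x₃), s(c, x₄), s(x₁, x₂), s(x₂, x₃), s(x₃, x₄), s(x₄, x₁)}

end PlanarTuran

open PlanarTuran

namespace PTAux

open SimpleGraph

universe u

variable {V : Type u} {W : Type u}

/-- Iso between a doubly-induced subgraph and the induced subgraph on the image. -/
noncomputable def induceInduceIso (G : SimpleGraph V) (t : Set V) (s : Set ↥t) :
    (G.induce t).induce s ≃g G.induce (Subtype.val '' s) where
  toEquiv := Equiv.Set.image Subtype.val s Subtype.val_injective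
  map_rel_iff' := by
    rintro ⟨⟨a, hat⟩, has⟩ ⟨⟨b, hbt⟩, hbs⟩
    simp [Equiv.Set.image, Equiv.Set.imageOfInjOn]

/-- `IsTwoConnected` is invariant under graph isomorphism. -/
lemma isTwoConnected_of_iso {G : SimpleGraph V} {H : SimpleGraph W} (φ : G ≃g H)
    (h : G.IsTwoConnected) : H.IsTwoConnected := by
  obtain ⟨h3, hconn⟩ := h
  refine ⟨by rwa [← Nat.card_congr φ.toEquiv], fun v => ?_⟩
  have key := hconn (φ.symm v)
  have ψ : G.induce {u | u ≠ φ.symm v} ≃g H.induce {u | u ≠ v} :=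
    { toEquiv := φ.toEquiv.subtypeEquiv (fun a => by
        constructor
        · intro ha hEq
          exact ha (by simp [← hEq])
        · intro ha hEq
          exact ha (by simp [hEq])),
      map_rel_iff' := by
        rintro ⟨a, _⟩ ⟨b, _⟩
        simpa using φ.map_rel_iff' }
  exact ψ.connected_iff.mp key

lemma ncard_induce_edgeSet (G : SimpleGraph V) (s : Set V) :
    (G.induce s).edgeSet.ncard = {e ∈ G.edgeSet | ∀ x ∈ e, x ∈ s}.ncard := by
  rw [← Set.ncard_image_of_injective _ (Sym2.map.injective (Subtype.val_injective (p := (· ∈ s))))]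
  congr 1
  ext e
  induction e with
  | _ x y =>
    simp only [Set.mem_image, Set.mem_setOf_eq]
    constructor
    · rintro ⟨e', he', heq⟩
      induction e' with
      | _ u w =>
        rw [Sym2.map_pair_eq] at heq
        rw [← heq]
        rw [mem_edgeSet] at he'
        refine ⟨(mem_edgeSet G).mpr he', ?_⟩
        intro z hz
        rcases Sym2.mem_iff.mp hz with rfl | rfl
        · exact u.2
        · exact w.2
    · rintro ⟨hadj, hmem⟩
      rw [mem_edgeSet] at hadj
      refine ⟨s(⟨x, hmem x (Sym2.mem_mk_left x y)⟩, ⟨y, hmem y (Sym2.mem_mk_right x y)⟩),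
        (mem_edgeSet G).mpr hadj, ?_⟩
      rw [Sym2.map_pair_eq]

/-- The core inductive bound: a `K₄`-free graph all of whose 2-connected induced
subgraphs have at most 4 vertices has at most `2n - 3` edges. -/
lemma core : ∀ (n : ℕ), ∀ {V : Type u} [Finite V] (G : SimpleGraph V),
    Nat.card V = n → G.CliqueFree 4 →
    (∀ s : Set V, (G.induce s).IsTwoConnected → Nat.card s ≤ 4) →
    G.edgeSet.ncard ≤ 2 * n - 3 := by
  intro n
  induction n using Nat.strong_induction_on with
  | _ n IH =>
    intro V _ G hcard hK4 hSmall
    have : Fintype V := Fintype.ofFinite V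
    classical
    have hedge : G.edgeSet.ncard = G.edgeFinset.card := by
      rw [Set.ncard_eq_toFinset_card']
      simp [edgeFinset]
    have hcard' : Fintype.card V = n := by rw [← hcard, Nat.card_eq_fintype_card]
    by_cases hsm : n ≤ 4
    · -- small cases
      have hchoose : G.edgeFinset.card ≤ (Fintype.card V).choose 2 :=
        card_edgeFinset_le_card_choose_two
      rw [hcard'] at hchoose
      by_cases h3 : n ≤ 3
      · have hcb : n.choose 2 ≤ 2 * n - 3 := by interval_cases n <;> decide
        omega
      · -- n = 4 : need e ≤ 5 from K4-free
        have hn4 : n = 4 := by omega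
        subst hn4
        rw [hedge]
        by_contra hcon
        push_neg at hcon
        -- there is a missing pair
        have hne : ∃ a b : V, a ≠ b ∧ ¬ G.Adj a b := by
          by_contra hall
          push_neg at hall
          refine hK4 Finset.univ ⟨?_, by simpa using hcard'⟩
          intro a _ b _ hab
          exact hall a b hab
        obtain ⟨a, b, hab, hnadj⟩ := hne
        have hsub : G.edgeFinset ⊆ (⊤ : SimpleGraph V).edgeFinset.erase s(a, b) := by
          intro e he
          refine Finset.mem_erase.mpr ⟨?_, edgeFinset_mono le_top he⟩
          rintro rfl
          exact hnadj (by simpa using he)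
        have hle := Finset.card_le_card hsub
        rw [Finset.card_erase_of_mem (by simp [hab]),
          card_edgeFinset_top_eq_card_choose_two, hcard'] at hle
        have : (4 : ℕ).choose 2 = 6 := by decide
        omega
    · -- n ≥ 5
      push_neg at hsm
      -- there is a vertex whose deletion disconnects
      have hncut : ∃ v : V, ¬ (G.induce {u | u ≠ v}).Connected := by
        by_contra hcut
        push_neg at hcut
        have h2 : (G.induce (Set.univ : Set V)).IsTwoConnected := by
          constructor
          · rw [Nat.card_congr (Equiv.Set.univ V), hcard]; omega
          · intro v
            have φ := induceInduceIso G Set.univ {u | u ≠ v}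
            have hset : (Subtype.val '' {u : ↥(Set.univ : Set V) | u ≠ v}) = {u | u ≠ v.1} := by
              ext x
              simp [Subtype.ext_iff]
            rw [hset] at φ
            exact φ.symm.connected_iff.mp (hcut v.1)
        have h4 := hSmall Set.univ h2
        rw [Nat.card_congr (Equiv.Set.univ V), hcard] at h4
        omega
      obtain ⟨v, hv⟩ := hncut
      have hnontriv : Nontrivial V :=
        Finite.one_lt_card_iff_nontrivial.mp (by omega)
      obtain ⟨w, hwv⟩ := exists_ne v
      have hne : Nonempty ↥{u : V | u ≠ v} := ⟨⟨w, hwv⟩⟩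
      rw [connected_iff] at hv
      push_neg at hv
      have hnprec : ¬ (G.induce {u : V | u ≠ v}).Preconnected := fun hp => (hv hp).false hne.some
      simp only [Preconnected] at hnprec
      push_neg at hnprec
      obtain ⟨a, b, hab⟩ := hnprec
      -- the component of `a` in `G - v`
      set A : Set V := {u | ∃ h : u ≠ v, (G.induce {u : V | u ≠ v}).Reachable a ⟨u, h⟩} with hA
      have haA : a.1 ∈ A := ⟨a.2, by rw [Subtype.eta]⟩
      have hbA : b.1 ∉ A := by
        rintro ⟨h, hr⟩
        exact hab (by rwa [Subtype.eta] at hr)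
      set t₁ : Set V := A ∪ {v} with ht₁
      set t₂ : Set V := {u | u ≠ v ∧ u ∉ A} ∪ {v} with ht₂
      -- every edge lies within t₁ or within t₂
      have hcover : ∀ e ∈ G.edgeSet, (∀ x ∈ e, x ∈ t₁) ∨ (∀ x ∈ e, x ∈ t₂) := by
        intro e he
        induction e with
        | _ p q =>
          rw [mem_edgeSet] at he
          have hstep : ∀ p' q' : V, p' ≠ v → q' ≠ v → G.Adj p' q' → p' ∈ A → q' ∈ A := by
            rintro p' q' hp hq hpq ⟨hp', hr⟩
            refine ⟨hq, hr.trans (Adj.reachable ?_)⟩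
            exact hpq
          by_cases hpv : p = v
          · have hqv : q ≠ v := fun h => (G.ne_of_adj he) (hpv.trans h.symm)
            by_cases hqA : q ∈ A
            · left
              intro z hz
              rcases Sym2.mem_iff.mp hz with rfl | rfl
              · exact Or.inr hpv
              · exact Or.inl hqA
            · right
              intro z hz
              rcases Sym2.mem_iff.mp hz with rfl | rfl
              · exact Or.inr hpv
              · exact Or.inl ⟨hqv, hqA⟩
          · by_cases hqv : q = v
            · by_cases hpA : p ∈ A
              · left
                intro z hz
                rcases Sym2.mem_iff.mp hz with rfl | rfl
                · exact Or.inl hpA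
                · exact Or.inr hqv
              · right
                intro z hz
                rcases Sym2.mem_iff.mp hz with rfl | rfl
                · exact Or.inl ⟨hpv, hpA⟩
                · exact Or.inr hqv
            · by_cases hpA : p ∈ A
              · have hqA : q ∈ A := hstep p q hpv hqv he hpA
                left
                intro z hz
                rcases Sym2.mem_iff.mp hz with rfl | rfl
                · exact Or.inl hpA
                · exact Or.inl hqA
              · have hqA : q ∉ A := fun h => hpA (hstep q p hqv hpv he.symm h)
                right
                intro z hz
                rcases Sym2.mem_iff.mp hz with rfl | rfl
                · exact Or.inl ⟨hpv, hpA⟩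
                · exact Or.inl ⟨hqv, hqA⟩
      -- the two edge classes
      set E₁ : Set (Sym2 V) := {e ∈ G.edgeSet | ∀ x ∈ e, x ∈ t₁} with hE₁
      set E₂ : Set (Sym2 V) := {e ∈ G.edgeSet | ∀ x ∈ e, x ∈ t₂} with hE₂
      have hEsub : G.edgeSet ⊆ E₁ ∪ E₂ := by
        intro e he
        rcases hcover e he with h | h
        · exact Or.inl ⟨he, h⟩
        · exact Or.inr ⟨he, h⟩
      have hinter : ∀ u : V, u ∈ t₁ → u ∈ t₂ → u = v := by
        rintro u (huA | hu) (hu2 | hu2)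
        · exact absurd huA hu2.2
        · exact hu2
        · exact hu
        · exact hu2
      have hcount : G.edgeSet.ncard ≤ E₁.ncard + E₂.ncard := by
        calc G.edgeSet.ncard ≤ (E₁ ∪ E₂).ncard :=
              Set.ncard_le_ncard hEsub (Set.toFinite _)
        _ ≤ E₁.ncard + E₂.ncard := Set.ncard_union_le E₁ E₂
      -- sizes of the parts
      have hn₁ : 2 ≤ t₁.ncard := by
        have hsub : {a.1, v} ⊆ t₁ := by
          rintro z (rfl | rfl)
          · exact Or.inl haA
          · exact Or.inr rfl
        calc 2 = ({a.1, v} : Set V).ncard := (Set.ncard_pair a.2).symm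
        _ ≤ t₁.ncard := Set.ncard_le_ncard hsub (Set.toFinite _)
      have hn₂ : 2 ≤ t₂.ncard := by
        have hsub : {b.1, v} ⊆ t₂ := by
          rintro z (rfl | rfl)
          · exact Or.inl ⟨b.2, hbA⟩
          · exact Or.inr rfl
        calc 2 = ({b.1, v} : Set V).ncard := (Set.ncard_pair b.2).symm
        _ ≤ t₂.ncard := Set.ncard_le_ncard hsub (Set.toFinite _)
      have huniv : t₁ ∪ t₂ = Set.univ := by
        ext z
        simp only [Set.mem_union, Set.mem_univ, iff_true]
        by_cases hz : z = v
        · exact Or.inl (Or.inr hz)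
        · by_cases hzA : z ∈ A
          · exact Or.inl (Or.inl hzA)
          · exact Or.inr (Or.inl ⟨hz, hzA⟩)
      have hsum : t₁.ncard + t₂.ncard = n + 1 := by
        have h1 := Set.ncard_union_add_ncard_inter t₁ t₂ (Set.toFinite _) (Set.toFinite _)
        have h2 : t₁ ∩ t₂ = {v} := by
          ext z
          constructor
          · rintro ⟨hz1, hz2⟩
            exact hinter z hz1 hz2
          · rintro rfl
            exact ⟨Or.inr rfl, Or.inr rfl⟩
        rw [huniv, h2, Set.ncard_univ, hcard, Set.ncard_singleton] at h1
        omega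
      -- transfer hypotheses to induced subgraphs and apply IH
      have happly : ∀ t : Set V, t.ncard < n → (G.induce t).edgeSet.ncard ≤ 2 * t.ncard - 3 := by
        intro t hlt
        refine IH t.ncard hlt (G.induce t) (Nat.card_coe_set_eq t)
          (hK4.comap (Embedding.induce t).isContained) ?_
        intro s hs
        have φ := induceInduceIso G t s
        have h4 := hSmall (Subtype.val '' s) (isTwoConnected_of_iso φ hs)
        rw [Nat.card_congr (Equiv.Set.image Subtype.val s Subtype.val_injective)]
        exact h4
      have he₁ : E₁.ncard = (G.induce t₁).edgeSet.ncard := (ncard_induce_edgeSet G t₁).symm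
      have he₂ : E₂.ncard = (G.induce t₂).edgeSet.ncard := (ncard_induce_edgeSet G t₂).symm
      have hb₁ := happly t₁ (by omega)
      have hb₂ := happly t₂ (by omega)
      omega

end PTAux

/-- Let `G` be a planar graph on `n ≥ 2` vertices containing neither `K₄` nor
`C₅` as a subgraph, such that `G` contains no maximal `2`-connected subgraph on more than `4`
vertices. Then `e(G) ≤ 2n - 15/7`. -/
theorem planar_K4_C5_free_small_blocks_edge_bound {V : Type*} [Fintype V] [DecidableEq V]
    (G : SimpleGraph V) [DecidableRel G.Adj]
    (hplanar : G.IsPlanar) (hK4 : G.CliqueFree 4) (hC5 : G.CycleFree 5)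
    (n : ℕ) (hn : Fintype.card V = n) (hn2 : 2 ≤ n)
    (hblocks : ∀ H : G.Subgraph,
      Maximal (fun K : G.Subgraph => K.coe.IsTwoConnected) H → Nat.card H.verts ≤ 4) :
    (G.edgeFinset.card : ℚ) ≤ 2 * (n : ℚ) - 15 / 7 := by
  classical
  have hFin : Finite G.Subgraph := Finite.of_injective
    (fun H => (H.verts, {p : V × V | H.Adj p.1 p.2}))
    (by
      intro H K h
      rw [Prod.mk.injEq] at h
      refine SimpleGraph.Subgraph.ext h.1 ?_
      exact funext fun x => funext fun y => propext (Set.ext_iff.mp h.2 (x, y)))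
  have hSmall : ∀ s : Set V, (G.induce s).IsTwoConnected → Nat.card s ≤ 4 := by
    intro s hs
    have hiso : G.induce s ≃g ((⊤ : G.Subgraph).induce s).coe :=
      { toEquiv := Equiv.refl _,
        map_rel_iff' := by
          rintro ⟨a, ha⟩ ⟨b, hb⟩
          simp [Subgraph.induce_adj, ha, hb]
          exact ⟨fun h => h.2.2, fun h => ⟨ha, hb, h⟩⟩ }
    obtain ⟨H, hle, hmax⟩ := Finite.exists_le_maximal
      (p := fun K : G.Subgraph => K.coe.IsTwoConnected)
      (a := (⊤ : G.Subgraph).induce s)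
      (PTAux.isTwoConnected_of_iso hiso hs)
    have h4 := hblocks H hmax
    have hsub : s ⊆ H.verts := by
      have h1 := hle.1
      simpa using h1
    calc Nat.card s = s.ncard := Nat.card_coe_set_eq s
    _ ≤ H.verts.ncard := Set.ncard_le_ncard hsub (Set.toFinite _)
    _ = Nat.card H.verts := (Nat.card_coe_set_eq _).symm
    _ ≤ 4 := h4
  have hcore := PTAux.core n G (by rw [Nat.card_eq_fintype_card, hn]) hK4 hSmall
  have he : G.edgeSet.ncard = G.edgeFinset.card := by
    rw [Set.ncard_eq_toFinset_card']
    simp [edgeFinset]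
  have key : G.edgeFinset.card ≤ 2 * n - 3 := by omega
  have h3 : 3 ≤ 2 * n := by omega
  have hq : (G.edgeFinset.card : ℚ) ≤ ((2 * n - 3 : ℕ) : ℚ) := by exact_mod_cast key
  rw [Nat.cast_sub h3] at hq
  push_cast at hq
  linarith
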